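/- Let M_k and V_k be defined by M₀ = 0, M₁ = 0^{a₁−1}1, M_{k} = M_{k−1}^{a_k} M_{k−2}, and V_{−1}=1, V₀=0, V₁ = 0^{a₁−b₁−1}10^{b₁}, V_{k+1} = V_k^{a_{k+1}−b_{k+1}} V_{k−1} V_k^{b_{k+1}}, under the Ostrowski digit rules for (b_k). Set t_k = b₁ + b₂q₁ + ⋯ + b_k q_{k−1} and r_k = q_k − t_k. Then for every k ≥ 1, V_k = R_k T_k and M_k = T_k R_k, where T_k is the prefix of M_k of length t_k and R_k is the suffix of M_k of length r_k. In particular, V_k is a conjugate (cyclic shift) of M_k. -/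

import Mathlib

/-- `m`-fold concatenation of a word. -/
def wpow (W : List ℕ) : ℕ → List ℕ
  | 0 => []
  | n + 1 => W ++ wpow W n

theorem wpow_length (W : List ℕ) (n : ℕ) : (wpow W n).length = n * W.length := by
  induction n with
  | zero => simp [wpow]
  | succ m ih => simp [wpow, ih]; ring

theorem wpow_comm (W : List ℕ) (n : ℕ) : W ++ wpow W n = wpow W n ++ W := by
  induction n with
  | zero => simp [wpow]
  | succ m ih => simp only [wpow]; rw [List.append_assoc, ← ih]

theorem wpow_swap (T R : List ℕ) (n : ℕ) :
    wpow (T ++ R) n ++ T = T ++ wpow (R ++ T) n := by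
  induction n with
  | zero => simp [wpow]
  | succ m ih => simp only [wpow, List.append_assoc, ih]

theorem wpow_replicate (x : ℕ) (n : ℕ) : wpow [x] n = List.replicate n x := by
  induction n with
  | zero => simp [wpow]
  | succ m ih => simp [wpow, ih, List.replicate_succ]

theorem take_wpow_append (W X : List ℕ) (m b n : ℕ) (hb : b ≤ m) :
    (wpow W m ++ X).take (b * W.length + n) = wpow W b ++ (wpow W (m - b) ++ X).take n := by
  induction b generalizing m with
  | zero => simp [wpow]
  | succ c ih =>
      obtain ⟨m', rfl⟩ := Nat.exists_eq_add_of_le hb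
      have h1 : wpow W (c + 1 + m') ++ X = W ++ (wpow W (c + m') ++ X) := by
        rw [show c + 1 + m' = (c + m') + 1 by ring]; simp [wpow]
      have h2 : (c + 1) * W.length + n = W.length + (c * W.length + n) := by ring
      rw [h1, h2, List.take_length_add_append, ih (c + m') (by omega),
        show c + m' - c = m' from by omega, show c + 1 + m' - (c + 1) = m' from by omega]
      simp [wpow]

theorem drop_wpow_append (W X : List ℕ) (m b n : ℕ) (hb : b ≤ m) :
    (wpow W m ++ X).drop (b * W.length + n) = (wpow W (m - b) ++ X).drop n := by
  induction b generalizing m with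
  | zero => simp [wpow]
  | succ c ih =>
      obtain ⟨m', rfl⟩ := Nat.exists_eq_add_of_le hb
      have h1 : wpow W (c + 1 + m') ++ X = W ++ (wpow W (c + m') ++ X) := by
        rw [show c + 1 + m' = (c + m') + 1 by ring]; simp [wpow]
      have h2 : (c + 1) * W.length + n = W.length + (c * W.length + n) := by ring
      rw [h1, h2, List.drop_length_add_append, ih (c + m') (by omega),
        show c + m' - c = m' from by omega, show c + 1 + m' - (c + 1) = m' from by omega]

theorem conj_step (T R Mk Vk Vk1 Mk1 : List ℕ) (c bb : ℕ)
    (hM : Mk = T ++ R) (hVk : Vk = R ++ T) (hkey : Mk1 ++ T = T ++ Vk1) :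
    wpow Vk (c + 1) ++ Vk1 ++ wpow Vk bb = (R ++ wpow Mk c ++ Mk1) ++ (wpow Mk bb ++ T) := by
  subst hM hVk
  have hkey' : ∀ X : List ℕ, Mk1 ++ (T ++ X) = T ++ (Vk1 ++ X) := by
    intro X; rw [← List.append_assoc, hkey, List.append_assoc]
  have hswap' : ∀ (X : List ℕ) (n : ℕ),
      wpow (T ++ R) n ++ (T ++ X) = T ++ (wpow (R ++ T) n ++ X) := by
    intro X n; rw [← List.append_assoc, wpow_swap, List.append_assoc]
  symm
  simp only [List.append_assoc]
  rw [wpow_swap T R bb, hkey', hswap']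
  simp [wpow, List.append_assoc]

theorem conj_step2 (T R R' Mk Vk Vk1 : List ℕ) (aa : ℕ)
    (hM : Mk = T ++ R) (hVk : Vk = R ++ T) (hVk1 : Vk1 = R' ++ T) :
    Vk1 ++ wpow Vk aa = R' ++ (wpow Mk aa ++ T) := by
  subst hM hVk hVk1
  rw [wpow_swap T R aa]
  simp [List.append_assoc]

theorem key_step (T R Mk Vk : List ℕ) (bb : ℕ)
    (hM : Mk = T ++ R) (hVk : Vk = R ++ T) :
    Mk ++ (wpow Mk bb ++ T) = (wpow Mk bb ++ T) ++ Vk := by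
  subst hM hVk
  rw [wpow_swap T R bb]
  simp only [List.append_assoc]
  congr 1
  rw [← wpow_comm]
  simp [List.append_assoc]
/-- Invariant for the induction. -/
def WordInv (q : ℕ → ℕ) (M V : ℕ → List ℕ) (t : ℕ → ℕ) (k : ℕ) : Prop :=
  (M k).length = q k ∧ t k < q k ∧
  V k = (M k).drop (t k) ++ (M k).take (t k) ∧
  M (k - 1) ++ (M k).take (t k) = (M k).take (t k) ++ V (k - 1)

/-- For `k ≥ 1`, `V_k = R_k T_k` and `M_k = T_k R_k`, where `T_k` is the prefix of
`M_k` of length `t_k = b₁ + b₂q₁ + ⋯ + b_k q_{k−1}` and `R_k` is the suffix of `M_k`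
of length `r_k = q_k − t_k`; in particular `V_k` is a conjugate of `M_k`. -/
theorem V_conjugate_of_M (a b : ℕ → ℕ) (ha : ∀ k : ℕ, 1 ≤ k → 1 ≤ a k)
    (hb1 : b 1 ≤ a 1 - 1) (hb : ∀ k : ℕ, 2 ≤ k → b k ≤ a k)
    (hrule : ∀ k : ℕ, 1 ≤ k → b (k + 1) = a (k + 1) → b k = 0)
    (q : ℕ → ℕ) (hq0 : q 0 = 1) (hq1 : q 1 = a 1)
    (hq : ∀ k : ℕ, 1 ≤ k → q (k + 1) = a (k + 1) * q k + q (k - 1))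
    (M : ℕ → List ℕ) (hM0 : M 0 = [0])
    (hM1 : M 1 = wpow [0] (a 1 - 1) ++ [1])
    (hM : ∀ k : ℕ, 1 ≤ k → M (k + 1) = wpow (M k) (a (k + 1)) ++ M (k - 1))
    (V : ℕ → List ℕ) (hV0 : V 0 = [0])
    (hV1 : V 1 = wpow [0] (a 1 - b 1 - 1) ++ [1] ++ wpow [0] (b 1))
    (hV : ∀ k : ℕ, 1 ≤ k →
      V (k + 1) = wpow (V k) (a (k + 1) - b (k + 1)) ++ V (k - 1) ++ wpow (V k) (b (k + 1)))
    (t : ℕ → ℕ) (ht : ∀ k : ℕ, t k = ∑ j ∈ Finset.range k, b (j + 1) * q j) :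
    ∀ k : ℕ, 1 ≤ k →
      V k = (M k).drop (t k) ++ (M k).take (t k) ∧
      M k = (M k).take (t k) ++ (M k).drop (t k) ∧
      ((M k).take (t k)).length = t k ∧
      ((M k).drop (t k)).length = q k - t k := by
  have ha1 : 1 ≤ a 1 := ha 1 le_rfl
  have ht0 : t 0 = 0 := by rw [ht]; simp
  have htsucc : ∀ k : ℕ, t (k + 1) = t k + b (k + 1) * q k := by
    intro k; rw [ht, ht, Finset.sum_range_succ]
  have P0 : WordInv q M V t 0 := by
    unfold WordInv
    refine ⟨by simp [hM0, hq0], by simp [ht0, hq0], ?_, ?_⟩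
    · simp [ht0, hV0, hM0]
    · simp [ht0, hM0, hV0]
  have P1 : WordInv q M V t 1 := by
    have ht1 : t 1 = b 1 := by rw [htsucc 0, ht0, hq0]; ring
    have hlen1 : (M 1).length = q 1 := by
      rw [hM1, List.length_append, wpow_length, hq1]; simp; omega
    have ht1q : t 1 < q 1 := by rw [ht1, hq1]; omega
    have hM1' : M 1 = List.replicate (a 1 - 1) 0 ++ [1] := by rw [hM1, wpow_replicate]
    have htake : (M 1).take (t 1) = List.replicate (b 1) 0 := by
      rw [hM1', ht1, List.take_append_of_le_length (by simp; omega), List.take_replicate]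
      congr 1; omega
    have hdrop : (M 1).drop (t 1) = List.replicate (a 1 - 1 - b 1) 0 ++ [1] := by
      rw [hM1', ht1, List.drop_append_of_le_length (by simp; omega), List.drop_replicate]
    unfold WordInv
    refine ⟨hlen1, ht1q, ?_, ?_⟩
    · rw [hV1, htake, hdrop, wpow_replicate, wpow_replicate,
        show a 1 - b 1 - 1 = a 1 - 1 - b 1 from by omega]
    · rw [hM0, hV0, htake, List.singleton_append, ← List.replicate_succ,
        List.replicate_succ']
  have step : ∀ k : ℕ, 1 ≤ k → WordInv q M V t (k - 1) → WordInv q M V t k →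
      WordInv q M V t (k + 1) := by
    intro k hk Pprev Pk
    obtain ⟨j, rfl⟩ : ∃ j, k = j + 1 := ⟨k - 1, by omega⟩
    unfold WordInv at Pprev Pk ⊢
    simp only [Nat.add_sub_cancel] at Pprev Pk ⊢
    obtain ⟨hlen', hlt', hconj', -⟩ := Pprev
    obtain ⟨hlen, hlt, hconj, hkey⟩ := Pk
    have hbb : b (j + 2) ≤ a (j + 2) := hb (j + 2) (by omega)
    have haa : 1 ≤ a (j + 2) := ha (j + 2) (by omega)
    have hMrec : M (j + 2) = wpow (M (j + 1)) (a (j + 2)) ++ M j := by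
      have h := hM (j + 1) (by omega); simpa using h
    have hVrec : V (j + 2) =
        wpow (V (j + 1)) (a (j + 2) - b (j + 2)) ++ V j ++ wpow (V (j + 1)) (b (j + 2)) := by
      have h := hV (j + 1) (by omega); simpa using h
    have hqrec : q (j + 2) = a (j + 2) * q (j + 1) + q j := by
      have h := hq (j + 1) (by omega); simpa using h
    have hts : t (j + 2) = b (j + 2) * (M (j + 1)).length + t (j + 1) := by
      rw [htsucc, hlen]; ring
    have hlen2 : (M (j + 2)).length = q (j + 2) := by
      rw [hMrec, List.length_append, wpow_length, hlen, hlen', hqrec]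
    by_cases hba : b (j + 2) = a (j + 2)
    · -- case b_{k+1} = a_{k+1}
      have hb0 : b (j + 1) = 0 := hrule (j + 1) (by omega) hba
      have htk : t (j + 1) = t j := by rw [htsucc j, hb0]; ring
      have hTk : (M (j + 1)).take (t (j + 1)) = (M j).take (t (j + 1)) := by
        rcases Nat.eq_zero_or_pos j with hj | hj
        · subst hj; rw [htk, ht0]; simp
        · obtain ⟨c, hc⟩ : ∃ c, a (j + 1) = c + 1 := ⟨a (j + 1) - 1, by have := ha (j + 1) (by omega); omega⟩
          have hMrec' : M (j + 1) = M j ++ (wpow (M j) c ++ M (j - 1)) := by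
            rw [hM j hj, hc]; simp [wpow, List.append_assoc]
          rw [htk, hMrec', List.take_append_of_le_length (by rw [hlen']; omega)]
      have hts2 : t (j + 2) = a (j + 2) * (M (j + 1)).length + t j := by
        rw [hts, hba, htk]
      have hT2 : (M (j + 2)).take (t (j + 2)) =
          wpow (M (j + 1)) (a (j + 2)) ++ (M j).take (t j) := by
        rw [hMrec, hts2, take_wpow_append _ _ _ _ _ le_rfl, Nat.sub_self]
        simp [wpow]
      have hD2 : (M (j + 2)).drop (t (j + 2)) = (M j).drop (t j) := by
        rw [hMrec, hts2, drop_wpow_append _ _ _ _ _ le_rfl, Nat.sub_self]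
        simp [wpow]
      have hlt2 : t (j + 2) < q (j + 2) := by
        have h1 : t (j + 2) = a (j + 2) * q (j + 1) + t j := by rw [hts2, hlen]
        rw [h1, hqrec]; omega
      have hMsplit : M (j + 1) = (M j).take (t j) ++ (M (j + 1)).drop (t (j + 1)) := by
        conv_lhs => rw [← List.take_append_drop (t (j + 1)) (M (j + 1))]
        rw [hTk, htk]
      have hVk : V (j + 1) = (M (j + 1)).drop (t (j + 1)) ++ (M j).take (t j) := by
        rw [hconj, hTk, htk]
      refine ⟨hlen2, hlt2, ?_, ?_⟩
      · rw [hVrec, hba, Nat.sub_self, hT2, hD2,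
          show wpow (V (j + 1)) 0 = ([] : List ℕ) from rfl, List.nil_append]
        exact conj_step2 _ _ _ _ _ _ (a (j + 2)) hMsplit hVk hconj'
      · have hT2' : (M (j + 2)).take (t (j + 2)) =
            wpow (M (j + 1)) (b (j + 2)) ++ (M (j + 1)).take (t (j + 1)) := by
          rw [hT2, hba, hTk, htk]
        rw [hT2']
        exact key_step _ _ _ _ (b (j + 2)) (List.take_append_drop _ _).symm hconj
    · -- case b_{k+1} < a_{k+1}
      have hba' : b (j + 2) < a (j + 2) := lt_of_le_of_ne hbb hba
      obtain ⟨c, hc⟩ : ∃ c, a (j + 2) - b (j + 2) = c + 1 := ⟨a (j + 2) - b (j + 2) - 1, by omega⟩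
      have hT2 : (M (j + 2)).take (t (j + 2)) =
          wpow (M (j + 1)) (b (j + 2)) ++ (M (j + 1)).take (t (j + 1)) := by
        rw [hMrec, hts, take_wpow_append _ _ _ _ _ (le_of_lt hba'), hc]
        congr 1
        rw [show wpow (M (j + 1)) (c + 1) = M (j + 1) ++ wpow (M (j + 1)) c from rfl,
          List.append_assoc, List.take_append_of_le_length (by rw [hlen]; omega)]
      have hD2 : (M (j + 2)).drop (t (j + 2)) =
          (M (j + 1)).drop (t (j + 1)) ++ (wpow (M (j + 1)) c ++ M j) := by
        rw [hMrec, hts, drop_wpow_append _ _ _ _ _ (le_of_lt hba'), hc,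
          show wpow (M (j + 1)) (c + 1) = M (j + 1) ++ wpow (M (j + 1)) c from rfl,
          List.append_assoc, List.drop_append_of_le_length (by rw [hlen]; omega)]
      have hlt2 : t (j + 2) < q (j + 2) := by
        have h1 : t (j + 2) = b (j + 2) * q (j + 1) + t (j + 1) := by rw [hts, hlen]
        have h2 : (b (j + 2) + 1) * q (j + 1) ≤ a (j + 2) * q (j + 1) :=
          Nat.mul_le_mul_right _ (by omega)
        have h3 : (b (j + 2) + 1) * q (j + 1) = b (j + 2) * q (j + 1) + q (j + 1) := by ring
        rw [h1, hqrec]; omega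
      refine ⟨hlen2, hlt2, ?_, ?_⟩
      · rw [hVrec, hD2, hT2, hc,
          ← List.append_assoc ((M (j + 1)).drop (t (j + 1))) (wpow (M (j + 1)) c) (M j)]
        exact conj_step _ _ _ _ _ _ c (b (j + 2)) (List.take_append_drop _ _).symm hconj hkey
      · rw [hT2]
        exact key_step _ _ _ _ (b (j + 2)) (List.take_append_drop _ _).symm hconj
  have main : ∀ k : ℕ, WordInv q M V t k ∧ WordInv q M V t (k + 1) := by
    intro k
    induction k with
    | zero => exact ⟨P0, P1⟩
    | succ n ih => exact ⟨ih.2, step (n + 1) (by omega) (by simpa using ih.1) ih.2⟩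
  intro k hk
  have h := (main k).1
  unfold WordInv at h
  obtain ⟨hlen, hlt, hconj, -⟩ := h
  refine ⟨hconj, (List.take_append_drop _ _).symm, ?_, ?_⟩
  · rw [List.length_take, hlen]; omega
  · rw [List.length_drop, hlen]
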